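/- In the conformal algebra setting with ⟨·,·⟩ nondegenerate of signature (p,q) on V = ℝ^{p+q} and [X,[X,Z]] = −2 Z(X)·X − ⟨X,X⟩·Z♯: for every X ≠ 0 there exists Z ∈ V* with [X,[X,Z]] = X. -/

import Mathlib

/-- In the conformal setting, for every `X ≠ 0` there is `Z ∈ V*` with
`−2 Z(X)•X − ⟨X,X⟩•Z♯ = X`. -/
theorem stmt6 {V : Type*} [AddCommGroup V] [Module ℝ V] [FiniteDimensional ℝ V]
    (B : LinearMap.BilinForm ℝ V) (hsymm : B.IsSymm) (hnd : B.Nondegenerate)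
    (sharp : Module.Dual ℝ V →ₗ[ℝ] V)
    (hsharp : ∀ (Z : Module.Dual ℝ V) (w : V), B (sharp Z) w = Z w)
    (X : V) (hX : X ≠ 0) :
    ∃ Z : Module.Dual ℝ V, -((2 * Z X) • X) - (B X X) • sharp Z = X := by
  by_cases ha : B X X = 0
  · obtain ⟨w, hw⟩ : ∃ w, B X w ≠ 0 := by
      by_contra h
      push_neg at h
      exact hX (hnd.1 X h)
    have hwX : B w X ≠ 0 := by
      rw [← hsymm.eq w X] at hw; simpa using hw
    refine ⟨(-1 / (2 * B w X)) • B w, ?_⟩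
    have hZX : ((-1 / (2 * B w X)) • B w) X = -1/2 := by
      simp only [LinearMap.smul_apply, smul_eq_mul]
      field_simp
    rw [hZX, ha]
    norm_num
  · set a := B X X with hadef
    refine ⟨(-1 / (3 * a)) • B X, ?_⟩
    have hZX : ((-1 / (3 * a)) • B X) X = -1 / 3 := by
      simp only [LinearMap.smul_apply, smul_eq_mul, ← hadef]
      field_simp
    have hsharpZ : sharp ((-1 / (3 * a)) • B X) = (-1 / (3 * a)) • X := by
      have key : ∀ w, B (sharp ((-1 / (3 * a)) • B X) - (-1 / (3 * a)) • X) w = 0 := by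
        intro w
        simp only [map_sub, LinearMap.sub_apply, map_smul, LinearMap.smul_apply, smul_eq_mul]
        rw [hsharp]
        simp [smul_eq_mul]
      exact sub_eq_zero.mp (hnd.1 _ key)
    rw [hZX, hsharpZ, smul_smul]
    have h1 : a * (-1 / (3 * a)) = -1/3 := by field_simp
    rw [h1]
    module
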